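/- Let α be a composition of n and let Z_α be the free ℚ-vector space with basis SET(α), with each π_i^{RS*} extended to a ℚ-linear endomorphism of Z_α (this is well defined since SET(α) ∪ {0} is closed under every π_i^{RS*}). If f : Z_α → Z_α is ℚ-linear with f ∘ f = f and f ∘ π_i^{RS*} = π_i^{RS*} ∘ f for all 1 ≤ i ≤ n−1, then f = 0 or f is the identity map; i.e. the 0-Hecke submodule Z_α is indecomposable. -/

import Mathlib

open Classical

namespace ImmHecke

/-- A filling assigns a natural-number entry to each cell `(row, column)` (0-indexed);
row `0` is the bottom row.  Cells outside the diagram carry the junk value `0`. -/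
abbrev Filling : Type := ℕ × ℕ → ℕ

/-- `c` is a cell of the diagram of the composition `α` (0-indexed rows and columns;
row `i` has `α_i` cells). -/
def IsCell (α : List ℕ) (c : ℕ × ℕ) : Prop :=
  c.1 < α.length ∧ c.2 < α.getD c.1 0

/-- `α` is a composition of `n`: a list of positive integers summing to `n`. -/
def IsComposition (α : List ℕ) (n : ℕ) : Prop :=
  (∀ a ∈ α, 0 < a) ∧ α.sum = n

/-- `T` is a bijective filling of the diagram of `α` with the entries `1, …, n`
(where `n = α.sum`), and with value `0` off the diagram. -/
def IsStdFilling (α : List ℕ) (T : Filling) : Prop :=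
  (∀ c, ¬ IsCell α c → T c = 0) ∧
  (∀ c, IsCell α c → 1 ≤ T c ∧ T c ≤ α.sum) ∧
  (∀ c c', IsCell α c → IsCell α c' → T c = T c' → c = c') ∧
  (∀ m, 1 ≤ m → m ≤ α.sum → ∃ c, IsCell α c ∧ T c = m)

/-- A standard immaculate tableau of shape `α`: a bijective standard filling whose
first-column entries strictly increase bottom to top and whose rows strictly
increase left to right. -/
def IsSIT (α : List ℕ) (T : Filling) : Prop :=
  IsStdFilling α T ∧
  (∀ i i' : ℕ, IsCell α (i, 0) → IsCell α (i', 0) → i < i' → T (i, 0) < T (i', 0)) ∧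
  (∀ i j j' : ℕ, IsCell α (i, j) → IsCell α (i, j') → j < j' → T (i, j) < T (i, j'))

/-- A standard extended tableau of shape `α`: a bijective standard filling whose rows
strictly increase left to right and all of whose columns strictly increase
bottom to top.  Note `SET(α) ⊆ SIT(α)`. -/
def IsSET (α : List ℕ) (T : Filling) : Prop :=
  IsStdFilling α T ∧
  (∀ i j j' : ℕ, IsCell α (i, j) → IsCell α (i, j') → j < j' → T (i, j) < T (i, j')) ∧
  (∀ i i' j : ℕ, IsCell α (i, j) → IsCell α (i', j) → i < i' → T (i, j) < T (i', j))

/-- `SIT*(α)`: standard immaculate tableaux whose first column contains exactly the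
entries `1, 2, …, ℓ(α)`. -/
def IsSITstar (α : List ℕ) (T : Filling) : Prop :=
  IsSIT α T ∧
  (∀ i, IsCell α (i, 0) → 1 ≤ T (i, 0) ∧ T (i, 0) ≤ α.length) ∧
  (∀ m, 1 ≤ m → m ≤ α.length → ∃ i, IsCell α (i, 0) ∧ T (i, 0) = m)

/-- In `T`, the entry `m+1` lies in a row strictly above the row of `m`. -/
def SuccAbove (α : List ℕ) (T : Filling) (m : ℕ) : Prop :=
  ∃ c c', IsCell α c ∧ IsCell α c' ∧ T c = m ∧ T c' = m + 1 ∧ c.1 < c'.1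

/-- In `T`, the entries `m` and `m+1` lie in the same row. -/
def SuccSameRow (α : List ℕ) (T : Filling) (m : ℕ) : Prop :=
  ∃ c c', IsCell α c ∧ IsCell α c' ∧ T c = m ∧ T c' = m + 1 ∧ c.1 = c'.1

/-- In `T`, the entry `m+1` lies in a row strictly below the row of `m`. -/
def SuccBelow (α : List ℕ) (T : Filling) (m : ℕ) : Prop :=
  ∃ c c', IsCell α c ∧ IsCell α c' ∧ T c = m ∧ T c' = m + 1 ∧ c'.1 < c.1

/-- In `T`, the entries `m` and `m+1` are both in the first column. -/
def BothFirstColumn (α : List ℕ) (T : Filling) (m : ℕ) : Prop :=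
  ∃ c c', IsCell α c ∧ IsCell α c' ∧ T c = m ∧ T c' = m + 1 ∧ c.2 = 0 ∧ c'.2 = 0

/-- `s_i(T)`: exchange the entries `i` and `i+1` of `T`. -/
def swapEntries (i : ℕ) (T : Filling) : Filling :=
  fun c => if T c = i then i + 1 else if T c = i + 1 then i else T c

/-- The row-strict dual immaculate 0-Hecke operator `π_i^{RS*}` on `SIT(α) ∪ {0}`
(`0` is encoded as `none`): `π_i(T) = T` if `i+1` is strictly above `i`;
`π_i(T) = 0` if `i` and `i+1` are in the same row; `π_i(T) = s_i(T)` if `i+1` is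
strictly below `i`. -/
noncomputable def piRS (α : List ℕ) (i : ℕ) : Option Filling → Option Filling
  | none => none
  | some T =>
    if SuccAbove α T i then some T
    else if SuccSameRow α T i then none
    else some (swapEntries i T)

/-- The dual immaculate 0-Hecke operator `π_i^{S*}` on `SIT(α) ∪ {0}`:
`π_i(T) = T` if `i+1` is in a row weakly below `i`; `π_i(T) = 0` if `i` and `i+1`
are both in the first column; `π_i(T) = s_i(T)` if `i+1` is strictly above `i`
and `i, i+1` are not both in the first column. -/
noncomputable def piS (α : List ℕ) (i : ℕ) : Option Filling → Option Filling
  | none => none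
  | some T =>
    if SuccSameRow α T i ∨ SuccBelow α T i then some T
    else if BothFirstColumn α T i then none
    else some (swapEntries i T)

/-- The 0-Hecke operator `π_i^{A*}` on `SIT(α)`: `π_i(T) = T` if `i+1` is strictly
above `i` or in the same row as `i`; `π_i(T) = s_i(T)` if `i+1` is strictly below `i`. -/
noncomputable def piA (α : List ℕ) (i : ℕ) (T : Filling) : Filling :=
  if SuccBelow α T i then swapEntries i T else T

/-- The 0-Hecke operator `π_i^{Ā*}` on `SIT(α) ∪ {0}`: `π_i(T) = T` if `i+1` is
strictly below `i`; `π_i(T) = 0` if `i` and `i+1` are in the same row or both in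
the first column; `π_i(T) = s_i(T)` if `i+1` is strictly above `i` and `i, i+1`
are not both in the first column. -/
noncomputable def piAbar (α : List ℕ) (i : ℕ) : Option Filling → Option Filling
  | none => none
  | some T =>
    if SuccBelow α T i then some T
    else if SuccSameRow α T i ∨ BothFirstColumn α T i then none
    else some (swapEntries i T)

/-- `x` belongs to `SIT(α) ∪ {0}` (with `0 = none`). -/
def InSITZ (α : List ℕ) (x : Option Filling) : Prop :=
  ∀ T, x = some T → IsSIT α T

/-- Successively apply the operators `π_{i_1}^{RS*}, …, π_{i_r}^{RS*}` (the list `l = [i_1, …, i_r]`). -/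
noncomputable def applySeqRS (α : List ℕ) (l : List ℕ) (x : Option Filling) : Option Filling :=
  l.foldl (fun y i => piRS α i y) x

/-- Successively apply the operators `π_{i_1}^{S*}, …, π_{i_r}^{S*}`. -/
noncomputable def applySeqS (α : List ℕ) (l : List ℕ) (x : Option Filling) : Option Filling :=
  l.foldl (fun y i => piS α i y) x

/-- The relation `T₁ ≼ T₂` on `SIT(α)`: some sequence of operators `π_i^{RS*}`
(indices in `{1, …, n-1}`, possibly empty) sends `T₁` to `T₂`. -/
def preRS (α : List ℕ) (T₁ T₂ : Filling) : Prop :=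
  ∃ l : List ℕ, (∀ i ∈ l, 1 ≤ i ∧ i ≤ α.sum - 1) ∧ applySeqRS α l (some T₁) = some T₂

/-- The one-line notation of `σ(T)`: read the entries of `T` from right to left in
each row, rows from top to bottom. -/
def readingWord (α : List ℕ) (T : Filling) : List ℕ :=
  ((List.range α.length).reverse).flatMap
    (fun i => ((List.range (α.getD i 0)).map fun j => T (i, j)).reverse)

/-- The number of inversions of a word `w`: pairs of positions `p < q` with `w p > w q`. -/
def inversions (w : List ℕ) : ℕ :=
  ((Finset.range w.length ×ˢ Finset.range w.length).filter
    (fun pq : ℕ × ℕ => pq.1 < pq.2 ∧ w.getD pq.2 0 < w.getD pq.1 0)).card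

/-- `S⁰_α`: first column contains `1, …, ℓ` bottom to top; the remaining cells are
filled with `ℓ+1, …, n` consecutively, reading rows from top to bottom and left to
right within each row. -/
noncomputable def S0 (α : List ℕ) : Filling := fun c =>
  if IsCell α c then
    if c.2 = 0 then c.1 + 1
    else
      α.length + (((List.range α.length).filter fun r => c.1 < r).map fun r => α.getD r 0 - 1).sum + c.2
  else 0

/-- `S^{row}_α`: the row superstandard tableau, entries `1, …, n` placed consecutively
reading rows bottom to top, left to right within each row. -/
noncomputable def Srow (α : List ℕ) : Filling := fun c =>
  if IsCell α c then (α.take c.1).sum + c.2 + 1 else 0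

/-- `S^{row*}_α`: first column contains `1, …, ℓ` bottom to top; the remaining cells
are filled with `ℓ+1, …, n` consecutively, reading rows bottom to top, left to right
within each row. -/
noncomputable def SrowStar (α : List ℕ) : Filling := fun c =>
  if IsCell α c then
    if c.2 = 0 then c.1 + 1
    else α.length + ((List.range c.1).map fun r => α.getD r 0 - 1).sum + c.2
  else 0

/-- `S^{col}_α`: the column superstandard tableau, entries `1, …, n` placed
consecutively reading columns bottom to top, columns left to right. -/
noncomputable def Scol (α : List ℕ) : Filling := fun c =>
  if IsCell α c then
    ((List.range c.2).map fun j' =>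
        ((List.range α.length).filter fun r => j' < α.getD r 0).length).sum
      + ((List.range c.1).filter fun r => c.2 < α.getD r 0).length + 1
  else 0

/-- The image of a basis element of `V_α` under the linearly extended operator
`π_i^{RS*}` (the value `0` of the operator is interpreted as the zero vector). -/
noncomputable def piTargetRS (α : List ℕ) (i : ℕ) (T : {T : Filling // IsSIT α T}) :
    ({T : Filling // IsSIT α T} →₀ ℚ) :=
  match piRS α i (some T.val) with
  | none => 0
  | some T' => if h : IsSIT α T' then Finsupp.single ⟨T', h⟩ 1 else 0

/-- The operator `π_i^{RS*}` extended to a `ℚ`-linear endomorphism of the free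
`ℚ`-vector space `V_α` with basis `SIT(α)`. -/
noncomputable def piRSLin (α : List ℕ) (i : ℕ) :
    ({T : Filling // IsSIT α T} →₀ ℚ) →ₗ[ℚ] ({T : Filling // IsSIT α T} →₀ ℚ) :=
  Finsupp.lsum ℚ fun T => LinearMap.toSpanSingleton ℚ _ (piTargetRS α i T)

/-- The image of a basis element of `Z_α` under the linearly extended operator
`π_i^{RS*}`. -/
noncomputable def piTargetSET (α : List ℕ) (i : ℕ) (T : {T : Filling // IsSET α T}) :
    ({T : Filling // IsSET α T} →₀ ℚ) :=
  match piRS α i (some T.val) with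
  | none => 0
  | some T' => if h : IsSET α T' then Finsupp.single ⟨T', h⟩ 1 else 0

/-- The operator `π_i^{RS*}` extended to a `ℚ`-linear endomorphism of the free
`ℚ`-vector space `Z_α` with basis `SET(α)`. -/
noncomputable def piRSLinSET (α : List ℕ) (i : ℕ) :
    ({T : Filling // IsSET α T} →₀ ℚ) →ₗ[ℚ] ({T : Filling // IsSET α T} →₀ ℚ) :=
  Finsupp.lsum ℚ fun T => LinearMap.toSpanSingleton ℚ _ (piTargetSET α i T)


/-! ### Auxiliary development -/

section Aux

variable {α : List ℕ}

/-- Column height: number of rows whose length exceeds `j`. -/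
def Hcol (α : List ℕ) (j : ℕ) : ℕ :=
  ((List.range α.length).filter fun r => j < α.getD r 0).length

/-- Number of cells in columns `< j`. -/
def Acol (α : List ℕ) (j : ℕ) : ℕ :=
  ((List.range j).map fun j' => Hcol α j').sum

/-- Number of cells in column `c.2` strictly below row `c.1`. -/
def Bcol (α : List ℕ) (c : ℕ × ℕ) : ℕ :=
  ((List.range c.1).filter fun r => c.2 < α.getD r 0).length

lemma scol_def (c : ℕ × ℕ) :
    Scol α c = if IsCell α c then Acol α c.2 + Bcol α c + 1 else 0 := rfl

lemma length_filter_range_mono (p : ℕ → Bool) {a b : ℕ} (h : a ≤ b) :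
    ((List.range a).filter p).length ≤ ((List.range b).filter p).length := by
  obtain ⟨k, rfl⟩ := Nat.exists_eq_add_of_le h
  rw [List.range_add, List.filter_append, List.length_append]
  omega

lemma length_filter_range_strict (p : ℕ → Bool) {a b : ℕ} (h : a < b) (hp : p a = true) :
    ((List.range a).filter p).length < ((List.range b).filter p).length := by
  have h1 : ((List.range (a+1)).filter p).length = ((List.range a).filter p).length + 1 := by
    rw [List.range_succ, List.filter_append, List.length_append]
    simp [hp]
  have h2 : ((List.range (a+1)).filter p).length ≤ ((List.range b).filter p).length :=
    length_filter_range_mono p (by omega)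
  omega

lemma range_map_getD : (List.range α.length).map (fun r => α.getD r 0) = α := by
  apply List.ext_getElem
  · simp
  · intro n h1 h2
    simp [List.getD, List.getElem?_eq_getElem h2]

lemma hcol_eq_countP (j : ℕ) : Hcol α j = α.countP (fun a => j < a) := by
  rw [Hcol, ← List.countP_eq_length_filter]
  have : α.countP (fun a => j < a)
      = ((List.range α.length).map (fun r => α.getD r 0)).countP (fun a => j < a) := by
    rw [range_map_getD]
  rw [this, List.countP_map]
  rfl

lemma acol_succ (j : ℕ) : Acol α (j+1) = Acol α j + Hcol α j := by
  rw [Acol, Acol, List.range_succ, List.map_append, List.sum_append]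
  simp

lemma acol_mono {j j' : ℕ} (h : j ≤ j') : Acol α j ≤ Acol α j' := by
  induction h with
  | refl => exact le_refl _
  | step _ ih => rename_i k _; rw [acol_succ]; omega

lemma min_succ_eq (k a : ℕ) : min (k+1) a = min k a + (if k < a then 1 else 0) := by
  split <;> omega

lemma map_min_succ_sum (l : List ℕ) (k : ℕ) :
    (l.map (fun a => min (k+1) a)).sum
      = (l.map (fun a => min k a)).sum + l.countP (fun a => k < a) := by
  induction l with
  | nil => simp
  | cons x l ih =>
    simp only [List.map_cons, List.sum_cons, List.countP_cons, ih]
    by_cases h : k < x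
    · simp [h, min_succ_eq]; omega
    · simp [h, min_succ_eq]; omega

lemma acol_le_sum (j : ℕ) : Acol α j ≤ α.sum := by
  have key : ∀ J, Acol α J = (α.map (fun a => min J a)).sum := by
    intro J
    induction J with
    | zero =>
      simp only [Acol, List.range_zero, List.map_nil, List.sum_nil, Nat.zero_min]
      induction α with
      | nil => simp
      | cons x l ih => simp_all
    | succ k ih =>
      rw [acol_succ, ih, hcol_eq_countP, map_min_succ_sum]
  rw [key]
  calc (α.map (fun a => min j a)).sum ≤ (α.map id).sum := by
        apply List.sum_le_sum
        intro i _
        simp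
      _ = α.sum := by simp

instance (α : List ℕ) : DecidablePred (IsCell α) := fun c => by
  unfold IsCell; infer_instance

lemma part_le_sum {r : ℕ} (hr : r < α.length) : α.getD r 0 ≤ α.sum := by
  have hmem : α.getD r 0 ∈ α := by
    rw [List.getD_eq_getElem α 0 hr]
    exact List.getElem_mem hr
  exact List.single_le_sum (fun x _ => Nat.zero_le x) _ hmem

/-- The finset of cells of `α`. -/
def cellsF (α : List ℕ) : Finset (ℕ × ℕ) :=
  (Finset.range α.length ×ˢ Finset.range (α.sum + 1)).filter (IsCell α)

lemma mem_cellsF {c : ℕ × ℕ} : c ∈ cellsF α ↔ IsCell α c := by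
  unfold cellsF
  simp only [Finset.mem_filter, Finset.mem_product, Finset.mem_range]
  constructor
  · tauto
  · intro h
    refine ⟨⟨h.1, ?_⟩, h⟩
    have := part_le_sum h.1
    have := h.2
    omega

lemma cellsF_card : (cellsF α).card = α.sum := by
  have hrepr : cellsF α = (Finset.range α.length).biUnion
      (fun r => (Finset.range (α.getD r 0)).map ⟨fun j => (r, j), fun a b h => by simpa using h⟩) := by
    ext c
    rw [mem_cellsF]
    simp only [Finset.mem_biUnion, Finset.mem_range, Finset.mem_map, Function.Embedding.coeFn_mk]
    constructor
    · intro h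
      exact ⟨c.1, h.1, c.2, h.2, rfl⟩
    · rintro ⟨r, hr, j, hj, rfl⟩
      exact ⟨hr, hj⟩
  rw [hrepr, Finset.card_biUnion]
  · have : ∀ r, ((Finset.range (α.getD r 0)).map ⟨fun j => (r, j), fun a b h => by simpa using h⟩).card = α.getD r 0 := by
      intro r; rw [Finset.card_map, Finset.card_range]
    rw [Finset.sum_congr rfl (fun r _ => this r)]
    -- ∑ r in range α.length, α.getD r 0 = α.sum
    have : ∀ (l : List ℕ) (n : ℕ) (f : ℕ → ℕ),
        ((List.range n).map f).sum = ∑ i ∈ Finset.range n, f i := by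
      intro l n f
      induction n with
      | zero => simp
      | succ k ih => rw [List.range_succ, List.map_append, List.sum_append, Finset.sum_range_succ, ih]; simp
    rw [← this α α.length (fun r => α.getD r 0), range_map_getD]
  · intro x _ y _ hxy
    simp only [Finset.disjoint_left]
    intro c hc hc'
    simp only [Finset.mem_map, Function.Embedding.coeFn_mk, Finset.mem_range] at hc hc'
    obtain ⟨j, _, rfl⟩ := hc
    obtain ⟨j', _, h⟩ := hc'
    exact hxy (congrArg Prod.fst h).symm

lemma bcol_lt_hcol {c : ℕ × ℕ} (hc : IsCell α c) : Bcol α c < Hcol α c.2 := by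
  apply length_filter_range_strict _ hc.1
  simp only [decide_eq_true_eq]
  exact hc.2

/-- Strict monotonicity of `Scol` with respect to column-lexicographic order on cells. -/
lemma scol_lt {c c' : ℕ × ℕ} (hc : IsCell α c) (hc' : IsCell α c')
    (h : c.2 < c'.2 ∨ (c.2 = c'.2 ∧ c.1 < c'.1)) : Scol α c < Scol α c' := by
  rw [scol_def, scol_def, if_pos hc, if_pos hc']
  rcases h with h | ⟨h2, h1⟩
  · have hb : Bcol α c < Hcol α c.2 := bcol_lt_hcol hc
    have ha : Acol α c.2 + Hcol α c.2 = Acol α (c.2 + 1) := (acol_succ c.2).symm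
    have ham : Acol α (c.2+1) ≤ Acol α c'.2 := acol_mono h
    omega
  · have hb : Bcol α c < Bcol α c' := by
      unfold Bcol
      rw [h2]
      apply length_filter_range_strict _ h1
      simp only [decide_eq_true_eq]
      rw [← h2]
      exact hc.2
    have hA : Acol α c.2 = Acol α c'.2 := by rw [h2]
    omega

lemma scol_bounds {c : ℕ × ℕ} (hc : IsCell α c) : 1 ≤ Scol α c ∧ Scol α c ≤ α.sum := by
  rw [scol_def, if_pos hc]
  refine ⟨by omega, ?_⟩
  have hb : Bcol α c < Hcol α c.2 := bcol_lt_hcol hc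
  have ha : Acol α c.2 + Hcol α c.2 = Acol α (c.2 + 1) := (acol_succ c.2).symm
  have := acol_le_sum (α := α) (c.2 + 1)
  omega

lemma scol_inj {c c' : ℕ × ℕ} (hc : IsCell α c) (hc' : IsCell α c')
    (h : Scol α c = Scol α c') : c = c' := by
  by_contra hne
  rcases Nat.lt_trichotomy c.2 c'.2 with h2 | h2 | h2
  · exact absurd h (Nat.ne_of_lt (scol_lt hc hc' (Or.inl h2)))
  · rcases Nat.lt_trichotomy c.1 c'.1 with h1 | h1 | h1
    · exact absurd h (Nat.ne_of_lt (scol_lt hc hc' (Or.inr ⟨h2, h1⟩)))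
    · exact hne (Prod.ext h1 h2)
    · exact absurd h.symm (Nat.ne_of_lt (scol_lt hc' hc (Or.inr ⟨h2.symm, h1⟩)))
  · exact absurd h.symm (Nat.ne_of_lt (scol_lt hc' hc (Or.inl h2)))

lemma scol_lt_iff {c c' : ℕ × ℕ} (hc : IsCell α c) (hc' : IsCell α c') :
    Scol α c < Scol α c' ↔ (c.2 < c'.2 ∨ (c.2 = c'.2 ∧ c.1 < c'.1)) := by
  constructor
  · intro h
    rcases Nat.lt_trichotomy c.2 c'.2 with h2 | h2 | h2
    · exact Or.inl h2
    · rcases Nat.lt_trichotomy c.1 c'.1 with h1 | h1 | h1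
      · exact Or.inr ⟨h2, h1⟩
      · exfalso; rw [Prod.ext h1 h2] at h; omega
      · exact absurd (scol_lt hc' hc (Or.inr ⟨h2.symm, h1⟩)) (by omega)
    · exact absurd (scol_lt hc' hc (Or.inl h2)) (by omega)
  · exact scol_lt hc hc'

lemma isStd_scol : IsStdFilling α (Scol α) := by
  refine ⟨fun c hc => by rw [scol_def, if_neg hc], fun c hc => scol_bounds hc,
    fun c c' hc hc' => scol_inj hc hc', ?_⟩
  -- surjectivity via cardinality
  intro m hm1 hm2
  have hcard : (Finset.Icc 1 α.sum).card ≤ (cellsF α).card := by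
    rw [cellsF_card, Nat.card_Icc]; omega
  have hmaps : ∀ c (hc : c ∈ cellsF α), Scol α c ∈ Finset.Icc 1 α.sum := by
    intro c hc
    rw [mem_cellsF] at hc
    have := scol_bounds hc
    rw [Finset.mem_Icc]; omega
  have hinj : ∀ c₁ c₂ (h₁ : c₁ ∈ cellsF α) (h₂ : c₂ ∈ cellsF α),
      Scol α c₁ = Scol α c₂ → c₁ = c₂ := by
    intro c₁ c₂ h₁ h₂
    rw [mem_cellsF] at h₁ h₂
    exact scol_inj h₁ h₂
  obtain ⟨c, hc, hval⟩ := Finset.surj_on_of_inj_on_of_card_le _ hmaps hinj hcard m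
    (by rw [Finset.mem_Icc]; omega)
  rw [mem_cellsF] at hc
  exact ⟨c, hc, hval.symm⟩

lemma isSET_scol : IsSET α (Scol α) := by
  refine ⟨isStd_scol, ?_, ?_⟩
  · intro i j j' hc hc' hj
    exact scol_lt hc hc' (Or.inl hj)
  · intro i i' j hc hc' hi
    exact scol_lt hc hc' (Or.inr ⟨rfl, hi⟩)


/-! ### Cell locations -/

/-- The cell containing entry `m` in `T` (junk value if not unique/existent). -/
noncomputable def cellOf (α : List ℕ) (T : Filling) (m : ℕ) : ℕ × ℕ :=
  if h : ∃ c, IsCell α c ∧ T c = m then h.choose else (0, 0)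

lemma cellOf_spec {T : Filling} (hT : IsStdFilling α T) {m : ℕ} (h1 : 1 ≤ m) (h2 : m ≤ α.sum) :
    IsCell α (cellOf α T m) ∧ T (cellOf α T m) = m := by
  have h : ∃ c, IsCell α c ∧ T c = m := hT.2.2.2 m h1 h2
  rw [cellOf, dif_pos h]
  exact h.choose_spec

lemma cellOf_isCell {T : Filling} (hT : IsStdFilling α T) {m : ℕ} (h1 : 1 ≤ m) (h2 : m ≤ α.sum) :
    IsCell α (cellOf α T m) := (cellOf_spec hT h1 h2).1

lemma cellOf_val {T : Filling} (hT : IsStdFilling α T) {m : ℕ} (h1 : 1 ≤ m) (h2 : m ≤ α.sum) :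
    T (cellOf α T m) = m := (cellOf_spec hT h1 h2).2

lemma cellOf_eq {T : Filling} (hT : IsStdFilling α T) {c : ℕ × ℕ} (hc : IsCell α c) :
    cellOf α T (T c) = c := by
  have hb := hT.2.1 c hc
  have hs := cellOf_spec hT hb.1 hb.2
  exact hT.2.2.1 _ _ hs.1 hc hs.2

/-- Characterisation of `SuccAbove` via cell rows. -/
lemma succAbove_iff {T : Filling} (hT : IsStdFilling α T) {m : ℕ} (h1 : 1 ≤ m) (h2 : m + 1 ≤ α.sum) :
    SuccAbove α T m ↔ (cellOf α T m).1 < (cellOf α T (m+1)).1 := by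
  constructor
  · rintro ⟨c, c', hc, hc', hv, hv', hr⟩
    rw [← hv, cellOf_eq hT hc, ← hv', cellOf_eq hT hc'] at *
    exact hr
  · intro hr
    exact ⟨_, _, cellOf_isCell hT h1 (by omega), cellOf_isCell hT (by omega) h2,
      cellOf_val hT h1 (by omega), cellOf_val hT (by omega) h2, hr⟩

lemma succSameRow_iff {T : Filling} (hT : IsStdFilling α T) {m : ℕ} (h1 : 1 ≤ m) (h2 : m + 1 ≤ α.sum) :
    SuccSameRow α T m ↔ (cellOf α T m).1 = (cellOf α T (m+1)).1 := by
  constructor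
  · rintro ⟨c, c', hc, hc', hv, hv', hr⟩
    rw [← hv, cellOf_eq hT hc, ← hv', cellOf_eq hT hc'] at *
    exact hr
  · intro hr
    exact ⟨_, _, cellOf_isCell hT h1 (by omega), cellOf_isCell hT (by omega) h2,
      cellOf_val hT h1 (by omega), cellOf_val hT (by omega) h2, hr⟩

lemma succBelow_iff {T : Filling} (hT : IsStdFilling α T) {m : ℕ} (h1 : 1 ≤ m) (h2 : m + 1 ≤ α.sum) :
    SuccBelow α T m ↔ (cellOf α T (m+1)).1 < (cellOf α T m).1 := by
  constructor
  · rintro ⟨c, c', hc, hc', hv, hv', hr⟩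
    rw [← hv, cellOf_eq hT hc, ← hv', cellOf_eq hT hc'] at *
    exact hr
  · intro hr
    exact ⟨_, _, cellOf_isCell hT h1 (by omega), cellOf_isCell hT (by omega) h2,
      cellOf_val hT h1 (by omega), cellOf_val hT (by omega) h2, hr⟩

lemma succBelow_of_not {T : Filling} (hT : IsStdFilling α T) {m : ℕ} (h1 : 1 ≤ m) (h2 : m + 1 ≤ α.sum)
    (hA : ¬ SuccAbove α T m) (hS : ¬ SuccSameRow α T m) : SuccBelow α T m := by
  rw [succAbove_iff hT h1 h2] at hA
  rw [succSameRow_iff hT h1 h2] at hS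
  rw [succBelow_iff hT h1 h2]
  omega

/-! ### Entry swaps -/

lemma swap_lt {i a b : ℕ} (hab : a < b) (hne : ¬(a = i ∧ b = i + 1)) :
    (if a = i then i + 1 else if a = i + 1 then i else a)
      < (if b = i then i + 1 else if b = i + 1 then i else b) := by
  split_ifs <;> omega

lemma swap_swap (i : ℕ) (T : Filling) : swapEntries i (swapEntries i T) = T := by
  funext c
  unfold swapEntries
  split_ifs <;> omega

lemma swap_apply (i : ℕ) (T : Filling) (c : ℕ × ℕ) :
    swapEntries i T c = if T c = i then i + 1 else if T c = i + 1 then i else T c := rfl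

variable {T : Filling} {i : ℕ}

lemma isStd_swap (hT : IsStdFilling α T) (h1 : 1 ≤ i) (h2 : i + 1 ≤ α.sum) :
    IsStdFilling α (swapEntries i T) := by
  obtain ⟨hoff, hbd, hinj, hsurj⟩ := hT
  refine ⟨?_, ?_, ?_, ?_⟩
  · intro c hc
    rw [swap_apply]
    have := hoff c hc
    split_ifs <;> omega
  · intro c hc
    rw [swap_apply]
    have := hbd c hc
    split_ifs <;> omega
  · intro c c' hc hc' h
    rw [swap_apply, swap_apply] at h
    apply hinj c c' hc hc'
    split_ifs at h <;> omega
  · intro m hm1 hm2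
    by_cases hmi : m = i
    · obtain ⟨c, hc, hv⟩ := hsurj (i+1) (by omega) h2
      refine ⟨c, hc, ?_⟩
      rw [swap_apply, hv]
      split_ifs <;> omega
    · by_cases hmi1 : m = i + 1
      · obtain ⟨c, hc, hv⟩ := hsurj i (by omega) (by omega)
        refine ⟨c, hc, ?_⟩
        rw [swap_apply, hv]
        split_ifs <;> omega
      · obtain ⟨c, hc, hv⟩ := hsurj m hm1 hm2
        refine ⟨c, hc, ?_⟩
        rw [swap_apply, hv]
        split_ifs <;> omega

lemma cellOf_swap_i (hT : IsStdFilling α T) (h1 : 1 ≤ i) (h2 : i + 1 ≤ α.sum) :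
    cellOf α (swapEntries i T) i = cellOf α T (i+1) := by
  have hc := cellOf_isCell hT (show 1 ≤ i + 1 by omega) h2
  have hv := cellOf_val hT (show 1 ≤ i + 1 by omega) h2
  have : swapEntries i T (cellOf α T (i+1)) = i := by
    rw [swap_apply, hv]
    split_ifs <;> omega
  have h3 := cellOf_eq (isStd_swap hT h1 h2) hc
  rw [this] at h3
  exact h3

lemma cellOf_swap_i1 (hT : IsStdFilling α T) (h1 : 1 ≤ i) (h2 : i + 1 ≤ α.sum) :
    cellOf α (swapEntries i T) (i+1) = cellOf α T i := by
  have hc := cellOf_isCell hT h1 (show i ≤ α.sum by omega)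
  have hv := cellOf_val hT h1 (show i ≤ α.sum by omega)
  have : swapEntries i T (cellOf α T i) = i + 1 := by
    rw [swap_apply, hv]
    split_ifs <;> omega
  have h3 := cellOf_eq (isStd_swap hT h1 h2) hc
  rw [this] at h3
  exact h3

lemma cellOf_swap_other (hT : IsStdFilling α T) (h1 : 1 ≤ i) (h2 : i + 1 ≤ α.sum)
    {m : ℕ} (hm1 : 1 ≤ m) (hm2 : m ≤ α.sum) (hne : m ≠ i) (hne' : m ≠ i + 1) :
    cellOf α (swapEntries i T) m = cellOf α T m := by
  have hc := cellOf_isCell hT hm1 hm2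
  have hv := cellOf_val hT hm1 hm2
  have : swapEntries i T (cellOf α T m) = m := by
    rw [swap_apply, hv]
    split_ifs <;> omega
  have h3 := cellOf_eq (isStd_swap hT h1 h2) hc
  rw [this] at h3
  exact h3

/-- Swapping two entries whose cells lie in different rows and different columns
preserves the SET property. -/
lemma isSET_swap (hT : IsSET α T) (h1 : 1 ≤ i) (h2 : i + 1 ≤ α.sum)
    (hrow : (cellOf α T i).1 ≠ (cellOf α T (i+1)).1)
    (hcol : (cellOf α T i).2 ≠ (cellOf α T (i+1)).2) :
    IsSET α (swapEntries i T) := by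
  obtain ⟨hstd, hrows, hcols⟩ := hT
  refine ⟨isStd_swap hstd h1 h2, ?_, ?_⟩
  · intro r j j' hc hc' hj
    rw [swap_apply, swap_apply]
    apply swap_lt (hrows r j j' hc hc' hj)
    rintro ⟨hvi, hvi'⟩
    apply hrow
    have e1 : cellOf α T i = (r, j) := by rw [← hvi]; exact cellOf_eq hstd hc
    have e2 : cellOf α T (i+1) = (r, j') := by rw [← hvi']; exact cellOf_eq hstd hc'
    rw [e1, e2]
  · intro r r' j hc hc' hr
    rw [swap_apply, swap_apply]
    apply swap_lt (hcols r r' j hc hc' hr)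
    rintro ⟨hvi, hvi'⟩
    apply hcol
    have e1 : cellOf α T i = (r, j) := by rw [← hvi]; exact cellOf_eq hstd hc
    have e2 : cellOf α T (i+1) = (r', j) := by rw [← hvi']; exact cellOf_eq hstd hc'
    rw [e1, e2]


/-! ### Column monotonicity under the "ascents are vertical" hypothesis -/

lemma col_step (hT : IsSET α T)
    (hca : ∀ i, SuccAbove α T i → (cellOf α T i).2 = (cellOf α T (i+1)).2)
    {m : ℕ} (h1 : 1 ≤ m) (h2 : m + 1 ≤ α.sum) :
    (cellOf α T m).2 ≤ (cellOf α T (m+1)).2 := by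
  have hstd := hT.1
  have hc := cellOf_isCell hstd h1 (show m ≤ α.sum by omega)
  have hc' := cellOf_isCell hstd (show 1 ≤ m+1 by omega) h2
  have hv := cellOf_val hstd h1 (show m ≤ α.sum by omega)
  have hv' := cellOf_val hstd (show 1 ≤ m+1 by omega) h2
  set c := cellOf α T m with hcdef
  set c' := cellOf α T (m+1) with hcdef'
  rcases Nat.lt_trichotomy c.1 c'.1 with hr | hr | hr
  · have h4 := hca m ((succAbove_iff hstd h1 h2).2 hr)
    rw [← hcdef, ← hcdef'] at h4
    omega
  · by_contra hcl
    push_neg at hcl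
    have hcell : IsCell α (c.1, c'.2) :=
      ⟨hc.1, show c'.2 < α.getD c.1 0 by have := hc.2; omega⟩
    have hlt := hT.2.1 c.1 c'.2 c.2 hcell (by rwa [Prod.mk.eta]) hcl
    have he : (c.1, c'.2) = c' := by rw [hr, Prod.mk.eta]
    rw [he, Prod.mk.eta, hv, hv'] at hlt
    omega
  · by_contra hcl
    push_neg at hcl
    have hcell : IsCell α (c.1, c'.2) :=
      ⟨hc.1, show c'.2 < α.getD c.1 0 by have := hc.2; omega⟩
    have h3 : T (c'.1, c'.2) < T (c.1, c'.2) := hT.2.2 c'.1 c.1 c'.2 (by rwa [Prod.mk.eta]) hcell hr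
    rw [Prod.mk.eta, hv'] at h3
    rcases Nat.lt_or_ge c'.2 c.2 with hlt2 | hge
    · have h4 : T (c.1, c'.2) < T (c.1, c.2) := hT.2.1 c.1 c'.2 c.2 hcell (by rwa [Prod.mk.eta]) hlt2
      rw [Prod.mk.eta, hv] at h4
      omega
    · have hee : c'.2 = c.2 := by omega
      rw [hee, Prod.mk.eta, hv] at h3
      omega

lemma col_mono (hT : IsSET α T)
    (hca : ∀ i, SuccAbove α T i → (cellOf α T i).2 = (cellOf α T (i+1)).2) :
    ∀ m m', 1 ≤ m → m ≤ m' → m' ≤ α.sum → (cellOf α T m).2 ≤ (cellOf α T m').2 := by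
  intro m m' h1 h2
  induction h2 with
  | refl => intro _; exact le_refl _
  | @step k hmk ih =>
    intro h3
    exact le_trans (ih (by omega)) (col_step hT hca (le_trans h1 hmk) h3)

/-! ### The two characterisations of `Scol` -/

lemma eq_scol_of_asc (hT : IsSET α T)
    (hAsc : ∀ i, SuccAbove α (Scol α) i → SuccAbove α T i) : T = Scol α := by
  have hS : IsStdFilling α (Scol α) := isStd_scol
  have hstd := hT.1
  have key : ∀ m, 1 ≤ m → m ≤ α.sum → cellOf α T m = cellOf α (Scol α) m := by
    intro m
    induction m using Nat.strong_induction_on with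
    | h m ih =>
    intro hm1 hm2
    have P1 : ∀ c : ℕ × ℕ, IsCell α c → Scol α c < m → T c = Scol α c := by
      intro c hc hlt
      have hb := hS.2.1 c hc
      have e1 : cellOf α (Scol α) (Scol α c) = c := cellOf_eq hS hc
      have e2 := ih (Scol α c) hlt hb.1 hb.2
      rw [e1] at e2
      have e3 := cellOf_val hstd hb.1 hb.2
      rw [e2] at e3
      exact e3
    have P2 : ∀ c : ℕ × ℕ, IsCell α c → T c < m → T c = Scol α c := by
      intro c hc hlt
      have hb := hstd.2.1 c hc
      have e1 : cellOf α T (T c) = c := cellOf_eq hstd hc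
      have e2 := ih (T c) hlt hb.1 hb.2
      rw [e1] at e2
      have e3 := cellOf_val hS hb.1 hb.2
      rw [← e2] at e3
      exact e3.symm
    have hdc : IsCell α (cellOf α (Scol α) m) := cellOf_isCell hS hm1 hm2
    have hdc' : IsCell α (cellOf α T m) := cellOf_isCell hstd hm1 hm2
    have hdv : Scol α (cellOf α (Scol α) m) = m := cellOf_val hS hm1 hm2
    have hdv' : T (cellOf α T m) = m := cellOf_val hstd hm1 hm2
    set d := cellOf α (Scol α) m with hddef
    set d' := cellOf α T m with hddef'
    have ha : ¬ (d'.2 < d.2 ∨ (d'.2 = d.2 ∧ d'.1 < d.1)) := by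
      intro hlex
      have h5 : Scol α d' < m := by
        rw [← hdv]; exact scol_lt hdc' hdc hlex
      have h6 := P1 d' hdc' h5
      omega
    rcases Nat.lt_trichotomy d'.2 d.2 with hcol | hcol | hcol
    · exact absurd (Or.inl hcol) ha
    · rcases Nat.lt_trichotomy d'.1 d.1 with hrow | hrow | hrow
      · exact absurd (Or.inr ⟨hcol, hrow⟩) ha
      · exact Prod.ext hrow hcol
      · exfalso
        have hcell2 : IsCell α (d'.1, d.2) := by rw [← hcol, Prod.mk.eta]; exact hdc'
        have hlt := hT.2.2 d.1 d'.1 d.2 (by rwa [Prod.mk.eta]) hcell2 hrow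
        have he : (d'.1, d.2) = d' := by rw [← hcol, Prod.mk.eta]
        rw [he, Prod.mk.eta, hdv'] at hlt
        have h6 := P2 d hdc (by omega)
        omega
    · exfalso
      have hc0 : IsCell α (d'.1, d'.2 - 1) :=
        ⟨hdc'.1, show d'.2 - 1 < α.getD d'.1 0 by have := hdc'.2; omega⟩
      have hlt0 : T (d'.1, d'.2 - 1) < T (d'.1, d'.2) :=
        hT.2.1 d'.1 (d'.2 - 1) d'.2 hc0 (by rwa [Prod.mk.eta]) (by omega)
      rw [Prod.mk.eta, hdv'] at hlt0
      have h6 := P2 _ hc0 hlt0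
      have h7 : Scol α (d'.1, d'.2 - 1) < m := by omega
      have h8 : Scol α (d'.1, d'.2 - 1) < Scol α d := by rwa [hdv]
      have h9 := (scol_lt_iff hc0 hdc).1 h8
      have hj' : d'.2 = d.2 + 1 ∧ d'.1 < d.1 := by
        rcases h9 with h | ⟨h, h'⟩
        · replace h : d'.2 - 1 < d.2 := h; omega
        · replace h : d'.2 - 1 = d.2 := h
          replace h' : d'.1 < d.1 := h'
          omega
      have hm2' : 2 ≤ m := by
        by_contra hcon
        have hm1' : m = 1 := by omega
        have := (hS.2.1 _ hc0).1
        omega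
      have hc1c : IsCell α (cellOf α (Scol α) (m-1)) := cellOf_isCell hS (by omega) (by omega)
      have hc1v : Scol α (cellOf α (Scol α) (m-1)) = m - 1 := cellOf_val hS (by omega) (by omega)
      set c1 := cellOf α (Scol α) (m-1) with hc1def
      have hdcell : IsCell α (d'.1, d.2) :=
        ⟨hdc'.1, show d.2 < α.getD d'.1 0 by have := hdc'.2; omega⟩
      have hv : Scol α (d'.1, d.2) < m := by
        rw [← hdv]
        exact scol_lt hdcell hdc (Or.inr ⟨rfl, hj'.2⟩)
      have hvpos := (hS.2.1 _ hdcell).1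
      by_cases hc1col : c1.2 = d.2
      · have hc1row : c1.1 < d.1 := by
          have hlt2 : Scol α c1 < Scol α d := by rw [hc1v, hdv]; omega
          rcases (scol_lt_iff hc1c hdc).1 hlt2 with h | ⟨_, h⟩
          · omega
          · exact h
        have hSA : SuccAbove α (Scol α) (m-1) := by
          refine ⟨c1, d, hc1c, hdc, hc1v, ?_, hc1row⟩
          rw [hdv]; omega
        have hTA := hAsc _ hSA
        rw [succAbove_iff hstd (by omega) (by omega)] at hTA
        have e := ih (m-1) (by omega) (by omega) (by omega)
        rw [e] at hTA
        have em : m - 1 + 1 = m := by omega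
        rw [em] at hTA
        rw [← hc1def, ← hddef'] at hTA
        rcases Nat.lt_or_ge (Scol α (d'.1, d.2)) (m-1) with hvlt | hvge
        · have hlex := (scol_lt_iff hdcell hc1c).1 (by rw [hc1v]; exact hvlt)
          rcases hlex with h | ⟨h, h'⟩
          · replace h : d.2 < c1.2 := h; omega
          · replace h' : d'.1 < c1.1 := h'; omega
        · have hveq : Scol α (d'.1, d.2) = m - 1 := by omega
          have heq := scol_inj hdcell hc1c (by rw [hc1v, hveq])
          have heq1 : d'.1 = c1.1 := by
            have := congrArg Prod.fst heq
            exact this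
          omega
      · have hc1lt : c1.2 < d.2 := by
          have hlt2 : Scol α c1 < Scol α d := by rw [hc1v, hdv]; omega
          rcases (scol_lt_iff hc1c hdc).1 hlt2 with h | ⟨h, _⟩
          · exact h
          · exact absurd h hc1col
        rcases Nat.lt_or_ge (Scol α (d'.1, d.2)) (m-1) with hvlt | hvge
        · have hlex := (scol_lt_iff hdcell hc1c).1 (by rw [hc1v]; exact hvlt)
          rcases hlex with h | ⟨h, _⟩
          · replace h : d.2 < c1.2 := h; omega
          · replace h : d.2 = c1.2 := h; omega
        · have hveq : Scol α (d'.1, d.2) = m - 1 := by omega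
          have heq := scol_inj hdcell hc1c (by rw [hc1v, hveq])
          have heq2 : d.2 = c1.2 := by
            have := congrArg Prod.snd heq
            exact this
          omega
  funext c
  by_cases hc : IsCell α c
  · have hb := hstd.2.1 c hc
    have e1 : cellOf α T (T c) = c := cellOf_eq hstd hc
    have e2 := key (T c) hb.1 hb.2
    rw [e1] at e2
    have e3 := cellOf_val hS hb.1 hb.2
    rw [← e2] at e3
    exact e3.symm
  · rw [hstd.1 c hc, (hS.1 c hc)]

lemma eq_scol_of_colasc (hT : IsSET α T)
    (hca : ∀ i, SuccAbove α T i → (cellOf α T i).2 = (cellOf α T (i+1)).2) : T = Scol α := by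
  have hS : IsStdFilling α (Scol α) := isStd_scol
  have hstd := hT.1
  have key : ∀ m, 1 ≤ m → m ≤ α.sum → cellOf α T m = cellOf α (Scol α) m := by
    intro m
    induction m using Nat.strong_induction_on with
    | h m ih =>
    intro hm1 hm2
    have P1 : ∀ c : ℕ × ℕ, IsCell α c → Scol α c < m → T c = Scol α c := by
      intro c hc hlt
      have hb := hS.2.1 c hc
      have e1 : cellOf α (Scol α) (Scol α c) = c := cellOf_eq hS hc
      have e2 := ih (Scol α c) hlt hb.1 hb.2
      rw [e1] at e2
      have e3 := cellOf_val hstd hb.1 hb.2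
      rw [e2] at e3
      exact e3
    have P2 : ∀ c : ℕ × ℕ, IsCell α c → T c < m → T c = Scol α c := by
      intro c hc hlt
      have hb := hstd.2.1 c hc
      have e1 : cellOf α T (T c) = c := cellOf_eq hstd hc
      have e2 := ih (T c) hlt hb.1 hb.2
      rw [e1] at e2
      have e3 := cellOf_val hS hb.1 hb.2
      rw [← e2] at e3
      exact e3.symm
    have hdc : IsCell α (cellOf α (Scol α) m) := cellOf_isCell hS hm1 hm2
    have hdc' : IsCell α (cellOf α T m) := cellOf_isCell hstd hm1 hm2
    have hdv : Scol α (cellOf α (Scol α) m) = m := cellOf_val hS hm1 hm2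
    have hdv' : T (cellOf α T m) = m := cellOf_val hstd hm1 hm2
    set d := cellOf α (Scol α) m with hddef
    set d' := cellOf α T m with hddef'
    have ha : ¬ (d'.2 < d.2 ∨ (d'.2 = d.2 ∧ d'.1 < d.1)) := by
      intro hlex
      have h5 : Scol α d' < m := by
        rw [← hdv]; exact scol_lt hdc' hdc hlex
      have h6 := P1 d' hdc' h5
      omega
    rcases Nat.lt_trichotomy d'.2 d.2 with hcol | hcol | hcol
    · exact absurd (Or.inl hcol) ha
    · rcases Nat.lt_trichotomy d'.1 d.1 with hrow | hrow | hrow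
      · exact absurd (Or.inr ⟨hcol, hrow⟩) ha
      · exact Prod.ext hrow hcol
      · exfalso
        have hcell2 : IsCell α (d'.1, d.2) := by rw [← hcol, Prod.mk.eta]; exact hdc'
        have hlt := hT.2.2 d.1 d'.1 d.2 (by rwa [Prod.mk.eta]) hcell2 hrow
        have he : (d'.1, d.2) = d' := by rw [← hcol, Prod.mk.eta]
        rw [he, Prod.mk.eta, hdv'] at hlt
        have h6 := P2 d hdc (by omega)
        omega
    · exfalso
      have hu1 := hstd.2.1 d hdc
      have hune : T d ≠ m := by
        intro he
        have h7 : cellOf α T (T d) = d := cellOf_eq hstd hdc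
        rw [he] at h7
        rw [← hddef'] at h7
        rw [h7] at hcol
        omega
      have hugt : m < T d := by
        rcases Nat.lt_or_ge (T d) m with hlt | hge
        · have := P2 d hdc hlt
          omega
        · omega
      have hcm := col_mono hT hca m (T d) hm1 (by omega) hu1.2
      have he2 : cellOf α T (T d) = d := cellOf_eq hstd hdc
      rw [he2] at hcm
      rw [← hddef'] at hcm
      omega
  funext c
  by_cases hc : IsCell α c
  · have hb := hstd.2.1 c hc
    have e1 : cellOf α T (T c) = c := cellOf_eq hstd hc
    have e2 := key (T c) hb.1 hb.2
    rw [e1] at e2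
    have e3 := cellOf_val hS hb.1 hb.2
    rw [← e2] at e3
    exact e3.symm
  · rw [hstd.1 c hc, (hS.1 c hc)]


/-! ### Packaged consequences -/

lemma scol_dominance (hT : IsSET α T) (hne : T ≠ Scol α) :
    ∃ i, 1 ≤ i ∧ i + 1 ≤ α.sum ∧ SuccAbove α (Scol α) i ∧ ¬ SuccAbove α T i := by
  by_contra hcon
  push_neg at hcon
  apply hne
  apply eq_scol_of_asc hT
  intro i hSA
  obtain ⟨c, c', hc, hc', hv, hv', _⟩ := hSA
  have hb := (isStd_scol (α := α)).2.1 c hc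
  have hb' := (isStd_scol (α := α)).2.1 c' hc'
  exact hcon i (by omega) (by omega) ⟨c, c', hc, hc', hv, hv', by
    obtain ⟨cc, cc', hcc, hcc', hvv, hvv', hrr⟩ := (⟨c, c', hc, hc', hv, hv', by assumption⟩ :
      SuccAbove α (Scol α) i)
    assumption⟩

lemma exists_desc (hT : IsSET α T) (hne : T ≠ Scol α) :
    ∃ i, 1 ≤ i ∧ i + 1 ≤ α.sum ∧ SuccAbove α T i ∧
      (cellOf α T i).2 ≠ (cellOf α T (i+1)).2 := by
  by_contra hcon
  push_neg at hcon
  apply hne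
  apply eq_scol_of_colasc hT
  intro i hSA
  obtain ⟨c, c', hc, hc', hv, hv', hr⟩ := hSA
  have hb := hT.1.2.1 c hc
  have hb' := hT.1.2.1 c' hc'
  exact hcon i (by omega) (by omega) ⟨c, c', hc, hc', hv, hv', hr⟩

/-- Weighted-row measure; it strictly drops when undoing an ascent. -/
noncomputable def meas (α : List ℕ) (T : Filling) : ℕ :=
  ∑ m ∈ Finset.Icc 1 α.sum, m * (cellOf α T m).1

lemma meas_lt (hT : IsStdFilling α T) {i : ℕ} (h1 : 1 ≤ i) (h2 : i + 1 ≤ α.sum)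
    (hSA : (cellOf α T i).1 < (cellOf α T (i+1)).1) :
    meas α (swapEntries i T) < meas α T := by
  have hmem : i ∈ Finset.Icc 1 α.sum := by rw [Finset.mem_Icc]; omega
  have hmem' : i + 1 ∈ (Finset.Icc 1 α.sum).erase i := by
    rw [Finset.mem_erase, Finset.mem_Icc]; omega
  have key : ∀ g : ℕ → ℕ,
      ∑ m ∈ Finset.Icc 1 α.sum, g m
        = g i + (g (i+1) + ∑ m ∈ ((Finset.Icc 1 α.sum).erase i).erase (i+1), g m) := by
    intro g
    rw [Finset.add_sum_erase _ g hmem', Finset.add_sum_erase _ g hmem]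
  rw [meas, meas, key (fun m => m * (cellOf α (swapEntries i T) m).1),
    key (fun m => m * (cellOf α T m).1)]
  have htail : ∑ m ∈ ((Finset.Icc 1 α.sum).erase i).erase (i+1),
      m * (cellOf α (swapEntries i T) m).1
      = ∑ m ∈ ((Finset.Icc 1 α.sum).erase i).erase (i+1), m * (cellOf α T m).1 := by
    apply Finset.sum_congr rfl
    intro m hm
    rw [Finset.mem_erase, Finset.mem_erase, Finset.mem_Icc] at hm
    rw [cellOf_swap_other hT h1 h2 (by omega) (by omega) hm.2.1 hm.1]
  rw [htail]
  rw [cellOf_swap_i hT h1 h2, cellOf_swap_i1 hT h1 h2]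
  have e1 : (i+1) * (cellOf α T i).1 = i * (cellOf α T i).1 + (cellOf α T i).1 := by ring
  have e2 : (i+1) * (cellOf α T (i+1)).1 = i * (cellOf α T (i+1)).1 + (cellOf α T (i+1)).1 := by
    ring
  omega

/-! ### Evaluation of the Hecke operators on basis vectors -/

lemma piRS_of_above (h : SuccAbove α T i) : piRS α i (some T) = some T := by
  simp only [piRS, if_pos h]

lemma piRS_of_same (hA : ¬ SuccAbove α T i) (hS : SuccSameRow α T i) :
    piRS α i (some T) = none := by
  simp only [piRS, if_neg hA, if_pos hS]

lemma piRS_of_below (hA : ¬ SuccAbove α T i) (hS : ¬ SuccSameRow α T i) :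
    piRS α i (some T) = some (swapEntries i T) := by
  simp only [piRS, if_neg hA, if_neg hS]

lemma piTargetSET_of_above (hT : IsSET α T) (h : SuccAbove α T i) :
    piTargetSET α i ⟨T, hT⟩ = Finsupp.single ⟨T, hT⟩ 1 := by
  unfold piTargetSET
  rw [piRS_of_above h]
  exact dif_pos hT

lemma piTargetSET_of_same (hT : IsSET α T) (hA : ¬ SuccAbove α T i) (hS : SuccSameRow α T i) :
    piTargetSET α i ⟨T, hT⟩ = 0 := by
  unfold piTargetSET
  rw [piRS_of_same hA hS]

lemma piTargetSET_of_below (hT : IsSET α T) (hA : ¬ SuccAbove α T i) (hS : ¬ SuccSameRow α T i)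
    (hW : IsSET α (swapEntries i T)) :
    piTargetSET α i ⟨T, hT⟩ = Finsupp.single ⟨swapEntries i T, hW⟩ 1 := by
  unfold piTargetSET
  rw [piRS_of_below hA hS]
  exact dif_pos hW

lemma piTargetSET_of_below_bad (hT : IsSET α T) (hA : ¬ SuccAbove α T i)
    (hS : ¬ SuccSameRow α T i) (hW : ¬ IsSET α (swapEntries i T)) :
    piTargetSET α i ⟨T, hT⟩ = 0 := by
  unfold piTargetSET
  rw [piRS_of_below hA hS]
  exact dif_neg hW

lemma piLin_single (i : ℕ) (s : {T : Filling // IsSET α T}) :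
    piRSLinSET α i (Finsupp.single s 1) = piTargetSET α i s := by
  unfold piRSLinSET
  rw [Finsupp.lsum_single, LinearMap.toSpanSingleton_apply, one_smul]

lemma coeff_zero_of_notAbove (i : ℕ) (y : {T : Filling // IsSET α T} →₀ ℚ) {U : Filling}
    (hU : IsSET α U) (h1 : 1 ≤ i) (h2 : i + 1 ≤ α.sum) (hnA : ¬ SuccAbove α U i) :
    (piRSLinSET α i y) ⟨U, hU⟩ = 0 := by
  have htgt : ∀ s : {T : Filling // IsSET α T},
      (piTargetSET α i s) ⟨U, hU⟩ = 0 := by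
    rintro ⟨V, hV⟩
    by_cases hA : SuccAbove α V i
    · rw [piTargetSET_of_above hV hA, Finsupp.single_apply, if_neg]
      intro he
      have : V = U := congrArg Subtype.val he
      rw [this] at hA
      exact hnA hA
    · by_cases hS : SuccSameRow α V i
      · rw [piTargetSET_of_same hV hA hS]; rfl
      · by_cases hW : IsSET α (swapEntries i V)
        · rw [piTargetSET_of_below hV hA hS hW, Finsupp.single_apply, if_neg]
          intro he
          have heq : swapEntries i V = U := congrArg Subtype.val he
          apply hnA
          have hB := succBelow_of_not hV.1 h1 h2 hA hS
          rw [succBelow_iff hV.1 h1 h2] at hB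
          rw [succAbove_iff hU.1 h1 h2]
          rw [← heq, cellOf_swap_i hV.1 h1 h2, cellOf_swap_i1 hV.1 h1 h2]
          exact hB
        · rw [piTargetSET_of_below_bad hV hA hS hW]; rfl
  unfold piRSLinSET
  rw [Finsupp.lsum_apply, Finsupp.sum, Finsupp.finset_sum_apply]
  apply Finset.sum_eq_zero
  intro s _
  rw [LinearMap.toSpanSingleton_apply, Finsupp.smul_apply, htgt s, smul_zero]

end Aux

theorem Z_indecomposable (n : ℕ) (α : List ℕ) (hα : IsComposition α n)
    (f : ({T : Filling // IsSET α T} →₀ ℚ) →ₗ[ℚ] ({T : Filling // IsSET α T} →₀ ℚ))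
    (hidem : f ∘ₗ f = f)
    (hcomm : ∀ i, 1 ≤ i → i ≤ n - 1 → f ∘ₗ piRSLinSET α i = piRSLinSET α i ∘ₗ f) :
    f = 0 ∨ f = LinearMap.id := by
  obtain ⟨hpos, hsum⟩ := hα
  subst hsum
  have hT0 : IsSET α (Scol α) := isSET_scol
  set s0 : {T : Filling // IsSET α T} := ⟨Scol α, hT0⟩ with hs0
  set a : ℚ := (f (Finsupp.single s0 1)) s0 with hadef
  have hcomm' : ∀ i, 1 ≤ i → i + 1 ≤ α.sum →
      ∀ y, f (piRSLinSET α i y) = piRSLinSET α i (f y) := by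
    intro i hi1 hi2 y
    have h := hcomm i hi1 (by omega)
    have h2 := LinearMap.ext_iff.1 h y
    simpa using h2
  have hstep1 : f (Finsupp.single s0 1) = a • Finsupp.single s0 1 := by
    apply Finsupp.ext
    rintro ⟨T, hT⟩
    by_cases he : (⟨T, hT⟩ : {T : Filling // IsSET α T}) = s0
    · rw [he, Finsupp.smul_apply, Finsupp.single_eq_same, smul_eq_mul, mul_one, hadef]
    · have hTne : T ≠ Scol α := by
        intro h
        exact he (by rw [hs0]; exact Subtype.ext h)
      obtain ⟨i, hi1, hi2, hSA, hnA⟩ := scol_dominance hT hTne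
      have hfix : piRSLinSET α i (Finsupp.single s0 1) = Finsupp.single s0 1 := by
        rw [hs0, piLin_single, piTargetSET_of_above hT0 hSA]
      have hkey : f (Finsupp.single s0 1) = piRSLinSET α i (f (Finsupp.single s0 1)) := by
        conv_lhs => rw [← hfix]
        rw [hcomm' i hi1 hi2]
      rw [hkey, coeff_zero_of_notAbove i _ hT hi1 hi2 hnA, Finsupp.smul_apply,
        Finsupp.single_apply, if_neg (Ne.symm he), smul_zero]
  have haa : a * a = a := by
    have h1 : f (f (Finsupp.single s0 1)) = f (Finsupp.single s0 1) := by
      have h2 := LinearMap.ext_iff.1 hidem (Finsupp.single s0 1)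
      simpa using h2
    rw [hstep1, map_smul, hstep1, smul_smul] at h1
    have h3 := congrArg (fun y : {T : Filling // IsSET α T} →₀ ℚ => y s0) h1
    simp only [Finsupp.smul_apply, Finsupp.single_eq_same, smul_eq_mul, mul_one] at h3
    exact h3
  have hall : ∀ k (T : Filling) (hT : IsSET α T), meas α T = k →
      f (Finsupp.single ⟨T, hT⟩ 1) = a • Finsupp.single ⟨T, hT⟩ 1 := by
    intro k
    induction k using Nat.strong_induction_on with
    | h k ih =>
    intro T hT hk
    by_cases hTe : T = Scol α
    · subst hTe
      have he : (⟨Scol α, hT⟩ : {T : Filling // IsSET α T}) = s0 := by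
        rw [hs0]
      rw [he]
      exact hstep1
    · obtain ⟨i, hi1, hi2, hSA, hcol⟩ := exists_desc hT hTe
      have hrowlt : (cellOf α T i).1 < (cellOf α T (i+1)).1 := by
        rw [succAbove_iff hT.1 hi1 hi2] at hSA; exact hSA
      have hrow : (cellOf α T i).1 ≠ (cellOf α T (i+1)).1 := by omega
      have hT' : IsSET α (swapEntries i T) := isSET_swap hT hi1 hi2 hrow hcol
      have hc1 : cellOf α (swapEntries i T) i = cellOf α T (i+1) := cellOf_swap_i hT.1 hi1 hi2
      have hc2 : cellOf α (swapEntries i T) (i+1) = cellOf α T i := cellOf_swap_i1 hT.1 hi1 hi2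
      have hnA : ¬ SuccAbove α (swapEntries i T) i := by
        rw [succAbove_iff hT'.1 hi1 hi2, hc1, hc2]; omega
      have hnS : ¬ SuccSameRow α (swapEntries i T) i := by
        rw [succSameRow_iff hT'.1 hi1 hi2, hc1, hc2]; omega
      have hswapback : swapEntries i (swapEntries i T) = T := swap_swap i T
      have hSETback : IsSET α (swapEntries i (swapEntries i T)) := by
        rw [hswapback]; exact hT
      have hpi : piRSLinSET α i (Finsupp.single ⟨swapEntries i T, hT'⟩ 1)
          = Finsupp.single ⟨T, hT⟩ 1 := by
        rw [piLin_single, piTargetSET_of_below hT' hnA hnS hSETback]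
        congr 1
        exact Subtype.ext hswapback
      have hmeas : meas α (swapEntries i T) < k := by
        rw [← hk]
        exact meas_lt hT.1 hi1 hi2 hrowlt
      have hrec := ih (meas α (swapEntries i T)) hmeas (swapEntries i T) hT' rfl
      rw [← hpi, hcomm' i hi1 hi2, hrec, map_smul, hpi]
  have hf : f = a • LinearMap.id := by
    apply Finsupp.lhom_ext
    rintro ⟨T, hT⟩ b
    have hb : (Finsupp.single (⟨T, hT⟩ : {T : Filling // IsSET α T}) b)
        = b • Finsupp.single (⟨T, hT⟩ : {T : Filling // IsSET α T}) 1 := by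
      rw [Finsupp.smul_single, smul_eq_mul, mul_one]
    rw [hb, map_smul, hall (meas α T) T hT rfl, LinearMap.smul_apply, LinearMap.id_apply,
      smul_smul, smul_smul, mul_comm]
  rcases eq_or_ne a 0 with h0 | h1
  · left
    rw [hf, h0, zero_smul]
  · right
    have : a = 1 :=
      mul_left_cancel₀ h1 (show a * a = a * 1 by rw [haa, mul_one])
    rw [hf, this, one_smul]

end ImmHecke
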